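/- The function g : [0, ∞) → ℝ defined by g(t) = Φ(√t), where Φ is the cumulative distribution function of the standard normal distribution, is concave on [0, ∞). -/
import Mathlib

open MeasureTheory ProbabilityTheory

/-- The cumulative distribution function of the standard normal distribution. -/
noncomputable def stdNormalCDF (t : ℝ) : ℝ :=
  ((gaussianReal 0 1) (Set.Iic t)).toReal

private lemma pdf_cont : Continuous (gaussianPDFReal 0 1) := by
  rw [gaussianPDFReal_def]
  fun_prop

private lemma cdf_eq (x : ℝ) :
    stdNormalCDF x = stdNormalCDF 0 + ∫ u in (0:ℝ)..x, gaussianPDFReal 0 1 u := by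
  have h : ∀ y : ℝ, stdNormalCDF y = ∫ u in Set.Iic y, gaussianPDFReal 0 1 u := by
    intro y
    rw [stdNormalCDF, gaussianReal_apply_eq_integral 0 one_ne_zero,
      ENNReal.toReal_ofReal (integral_nonneg fun u => gaussianPDFReal_nonneg _ _ _)]
  have key := intervalIntegral.integral_Iic_sub_Iic
    ((integrable_gaussianPDFReal 0 1).integrableOn (s := Set.Iic 0))
    ((integrable_gaussianPDFReal 0 1).integrableOn (s := Set.Iic x))
  rw [h x, h 0]
  linarith

private lemma pdf_sqrt (u : ℝ) (hu : 0 ≤ u) :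
    gaussianPDFReal 0 1 (Real.sqrt u) = (Real.sqrt (2 * Real.pi))⁻¹ * Real.exp (-u / 2) := by
  rw [gaussianPDFReal]
  rw [sub_zero, Real.sq_sqrt hu]
  norm_num

private lemma hasDeriv (t : ℝ) (ht : 0 < t) :
    HasDerivAt (fun t => stdNormalCDF (Real.sqrt t))
      (gaussianPDFReal 0 1 (Real.sqrt t) * (1 / (2 * Real.sqrt t))) t := by
  have hF : HasDerivAt (fun x => ∫ u in (0:ℝ)..x, gaussianPDFReal 0 1 u)
      (gaussianPDFReal 0 1 (Real.sqrt t)) (Real.sqrt t) :=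
    intervalIntegral.integral_hasDerivAt_right
      ((integrable_gaussianPDFReal 0 1).intervalIntegrable)
      pdf_cont.stronglyMeasurable.stronglyMeasurableAtFilter
      pdf_cont.continuousAt
  have hs : HasDerivAt Real.sqrt (1 / (2 * Real.sqrt t)) t := Real.hasDerivAt_sqrt ht.ne'
  have := hF.comp t hs
  have heq : (fun t => stdNormalCDF (Real.sqrt t))
      = fun t => stdNormalCDF 0 + ∫ u in (0:ℝ)..Real.sqrt t, gaussianPDFReal 0 1 u := by
    funext y; exact cdf_eq _
  rw [heq]
  exact (this.const_add (stdNormalCDF 0))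

/-- The function `g(t) = Φ(√t)`, where `Φ` is the standard normal CDF, is
concave on `[0, ∞)`. -/
theorem stmt_11 : ConcaveOn ℝ (Set.Ici (0 : ℝ)) (fun t => stdNormalCDF (Real.sqrt t)) := by
  have hcont : ContinuousOn (fun t => stdNormalCDF (Real.sqrt t)) (Set.Ici 0) := by
    have : Continuous (fun t => stdNormalCDF 0 + ∫ u in (0:ℝ)..Real.sqrt t,
        gaussianPDFReal 0 1 u) := by
      exact continuous_const.add (((integrable_gaussianPDFReal 0 1).continuous_primitive 0).comp
        Real.continuous_sqrt)
    refine (this.continuousOn).congr fun x _ => ?_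
    exact cdf_eq _
  refine AntitoneOn.concaveOn_of_deriv (convex_Ici 0) hcont ?_ ?_
  · rw [interior_Ici]
    exact fun t ht => (hasDeriv t ht).differentiableAt.differentiableWithinAt
  · rw [interior_Ici]
    intro a ha b hb hab
    rw [(hasDeriv a ha).deriv, (hasDeriv b hb).deriv, pdf_sqrt a ha.le, pdf_sqrt b hb.le]
    have hsa : 0 < Real.sqrt a := Real.sqrt_pos.mpr ha
    have hsb : 0 < Real.sqrt b := Real.sqrt_pos.mpr hb
    have h1 : Real.exp (-b / 2) ≤ Real.exp (-a / 2) := by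
      apply Real.exp_le_exp.mpr; linarith
    have h2 : (1 : ℝ) / (2 * Real.sqrt b) ≤ 1 / (2 * Real.sqrt a) := by
      have := Real.sqrt_le_sqrt hab
      apply one_div_le_one_div_of_le (by positivity) (by linarith)
    have hc : (0:ℝ) ≤ (Real.sqrt (2 * Real.pi))⁻¹ := by positivity
    calc (Real.sqrt (2 * Real.pi))⁻¹ * Real.exp (-b / 2) * (1 / (2 * Real.sqrt b))
        ≤ (Real.sqrt (2 * Real.pi))⁻¹ * Real.exp (-a / 2) * (1 / (2 * Real.sqrt a)) := by
          apply mul_le_mul (by apply mul_le_mul_of_nonneg_left h1 hc) h2 (by positivity)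
            (by positivity)
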